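/- Let X_S be a non-sofic S-gap shift and F ∈ Aut(X_S) a shiftless automorphism of radius r whose inverse also has radius r. Then for every x ∈ X_S, i ∈ ℤ, and n ≥ 2r, the word 01ⁿ0 occurs in x at position i if and only if 01ⁿ0 occurs in F(x) at position i. -/

import Mathlib

/-- The shift map on bi-infinite sequences. -/
def shiftMap {A : Type*} (x : ℤ → A) : ℤ → A := fun i => x (i + 1)

/-- The `k`-fold shift map (`σ^k`). -/
def shiftPow {A : Type*} (k : ℤ) (x : ℤ → A) : ℤ → A := fun i => x (i + k)

/-- A subshift: a closed shift-invariant subset of `A^ℤ`. -/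
def IsSubshift {A : Type*} [TopologicalSpace A] (X : Set (ℤ → A)) : Prop :=
  IsClosed X ∧ shiftMap '' X = X

/-- The word `w` occurs in `x` at position `i`. -/
def occursAt {A : Type*} (x : ℤ → A) (w : List A) (i : ℤ) : Prop :=
  ∀ (k : ℕ) (hk : k < w.length), x (i + k) = w.get ⟨k, hk⟩

/-- `w` belongs to the language of `X`. -/
def InLang {A : Type*} (X : Set (ℤ → A)) (w : List A) : Prop :=
  ∃ x ∈ X, occursAt x w 0

/-- The set of contexts of a word with respect to `X`. -/
def contexts {A : Type*} (X : Set (ℤ → A)) (w : List A) : Set (List A × List A) :=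
  {p | InLang X (p.1 ++ w ++ p.2)}

/-- `w` is a synchronizing word of `X`. -/
def IsSynchronizing {A : Type*} (X : Set (ℤ → A)) (w : List A) : Prop :=
  InLang X w ∧ ∀ u v : List A, InLang X (u ++ w) → InLang X (w ++ v) → InLang X (u ++ w ++ v)

/-- `X` is a transitive subshift. -/
def IsTransitiveSubshift {A : Type*} (X : Set (ℤ → A)) : Prop :=
  ∀ u v : List A, InLang X u → InLang X v → ∃ w : List A, InLang X (u ++ w ++ v)

/-- A reversible cellular automaton (automorphism) of the subshift `X`. -/
def IsAutomorphism {A : Type*} [TopologicalSpace A] (X : Set (ℤ → A))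
    (F : (ℤ → A) → (ℤ → A)) : Prop :=
  Set.MapsTo F X X ∧ ContinuousOn F X ∧ (∀ x ∈ X, F (shiftMap x) = shiftMap (F x)) ∧
  ∃ G : (ℤ → A) → (ℤ → A), Set.MapsTo G X X ∧ ContinuousOn G X ∧
    (∀ x ∈ X, G (shiftMap x) = shiftMap (G x)) ∧
    (∀ x ∈ X, G (F x) = x) ∧ (∀ x ∈ X, F (G x) = x)

/-- `F` is given on `X` by a local rule of radius `r`. -/
def HasRadius {A : Type*} (X : Set (ℤ → A)) (F : (ℤ → A) → (ℤ → A)) (r : ℕ) : Prop :=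
  ∃ f : (Fin (2 * r + 1) → A) → A, ∀ x ∈ X, ∀ i : ℤ, F x i = f (fun k => x (i - r + k))

/-- `x` is an equicontinuity point of `(X, F)` (combinatorial formulation). -/
def IsEquicontinuityPoint {A : Type*} (X : Set (ℤ → A)) (F : (ℤ → A) → (ℤ → A))
    (x : ℤ → A) : Prop :=
  x ∈ X ∧ ∀ N : ℕ, ∃ M : ℕ, ∀ y ∈ X, (∀ j : ℤ, |j| ≤ (M : ℤ) → y j = x j) →
    ∀ t : ℕ, ∀ j : ℤ, |j| ≤ (N : ℤ) → F^[t] y j = F^[t] x j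

/-- The generating word `0 1^n` of an `S`-gap shift. -/
def genWord (n : ℕ) : List Bool := false :: List.replicate n true

/-- `w` is a concatenation of generating words `0 1^n`, `n ∈ S`. -/
def InGenStar (S : Set ℕ) (w : List Bool) : Prop :=
  ∃ l : List ℕ, (∀ n ∈ l, n ∈ S) ∧ w = (l.map genWord).flatten

/-- The subword `x[i, i+n-1]` of a configuration. -/
def wordAt {A : Type*} (x : ℤ → A) (i : ℤ) (n : ℕ) : List A :=
  (List.range n).map fun k => x (i + k)

/-- The `S`-gap shift: configurations all of whose finite subwords occur in some
concatenation of the generating words. -/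
def SGap (S : Set ℕ) : Set (ℤ → Bool) :=
  {x | ∀ (i : ℤ) (n : ℕ), ∃ w : List Bool, InGenStar S w ∧ (wordAt x i n) <:+: w}

/-- The characteristic sequence of `S` is eventually periodic. -/
def EventuallyPeriodic (S : Set ℕ) : Prop :=
  ∃ p > 0, ∃ N : ℕ, ∀ n ≥ N, (n ∈ S ↔ n + p ∈ S)

/-- `X_{S,ℓ}`: points whose right tail from `0` is `01^∞`. -/
def SGapLeft (S : Set ℕ) : Set (ℤ → Bool) :=
  {x | x ∈ SGap S ∧ x 0 = false ∧ ∀ i : ℤ, 0 < i → x i = true}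

/-- `X_{S,→}`: points whose left tail up to `0` is `^∞10`. -/
def SGapRight (S : Set ℕ) : Set (ℤ → Bool) :=
  {x | x ∈ SGap S ∧ x 0 = false ∧ ∀ i : ℤ, i < 0 → x i = true}

/-- The word `0 1^n 0`. -/
def gapWord (n : ℕ) : List Bool := false :: (List.replicate n true ++ [false])

section Helpers

variable {S : Set ℕ}

lemma wordAt_def' (x : ℤ → Bool) (a : ℤ) (m : ℕ) :
    wordAt x a m = (List.range m).map (fun k : ℕ => x (a + k)) := by
  unfold wordAt
  simp [List.flatMap, Function.comp]
  induction (List.range m) with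
  | nil => rfl
  | cons h t ih => simp_all

lemma wordAt_congr {x y : ℤ → Bool} {a : ℤ} {m : ℕ}
    (h : ∀ k : ℕ, k < m → x (a + k) = y (a + k)) : wordAt x a m = wordAt y a m := by
  rw [wordAt_def', wordAt_def']
  apply List.map_congr_left
  intro k hk
  exact h k (List.mem_range.mp hk)

lemma wordAt_length (x : ℤ → Bool) (a : ℤ) (m : ℕ) : (wordAt x a m).length = m := by
  simp [wordAt_def']

lemma wordAt_eq_replicate {x : ℤ → Bool} {a : ℤ} {m : ℕ} {c : Bool}
    (h : ∀ k : ℕ, k < m → x (a + k) = c) : wordAt x a m = List.replicate m c := by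
  have h2 : ∀ b ∈ wordAt x a m, b = c := by
    intro b hb
    rw [wordAt_def'] at hb
    simp only [List.mem_map, List.mem_range] at hb
    obtain ⟨k, hk, rfl⟩ := hb
    exact h k hk
  have h3 := List.eq_replicate_of_mem h2
  rwa [wordAt_length] at h3

lemma wordAt_add (x : ℤ → Bool) (a : ℤ) (p q : ℕ) :
    wordAt x a (p + q) = wordAt x a p ++ wordAt x (a + p) q := by
  rw [wordAt_def', wordAt_def', wordAt_def']
  rw [List.range_add, List.map_append, List.map_map]
  congr 1
  apply List.map_congr_left
  intro k _
  show x (a + ((p : ℤ) + k)) = x (a + p + k)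
  congr 1
  push_cast
  ring

lemma wordAt_cons (x : ℤ → Bool) (a : ℤ) (m : ℕ) :
    wordAt x a (m + 1) = x a :: wordAt x (a + 1) m := by
  have := wordAt_add x a 1 m
  rw [Nat.add_comm 1 m] at this
  rw [this, wordAt_def']
  simp [List.range_succ]

lemma wordAt_snoc (x : ℤ → Bool) (a : ℤ) (m : ℕ) :
    wordAt x a (m + 1) = wordAt x a m ++ [x (a + m)] := by
  rw [wordAt_add x a m 1]
  congr 1
  rw [wordAt_def']
  simp [List.range_succ]

lemma wordAt_shiftPow (x : ℤ → Bool) (k a : ℤ) (m : ℕ) :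
    wordAt (shiftPow k x) a m = wordAt x (a + k) m := by
  rw [wordAt_def', wordAt_def']
  apply List.map_congr_left
  intro j _
  show x (a + j + k) = x (a + k + j)
  congr 1
  ring

lemma SGap_shiftPow {x : ℤ → Bool} (hx : x ∈ SGap S) (k : ℤ) : shiftPow k x ∈ SGap S := by
  intro a m
  rw [wordAt_shiftPow]
  exact hx (a + k) m

lemma radius_eq {F : (ℤ → Bool) → (ℤ → Bool)} {r : ℕ} (h : HasRadius (SGap S) F r)
    {x y : ℤ → Bool} (hx : x ∈ SGap S) (hy : y ∈ SGap S) (i : ℤ)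
    (hagree : ∀ j : ℤ, i - r ≤ j → j ≤ i + r → x j = y j) : F x i = F y i := by
  obtain ⟨f, hf⟩ := h
  rw [hf x hx i, hf y hy i]
  congr 1
  funext k
  have hk := k.isLt
  apply hagree <;> omega

lemma radius_shiftPow {F : (ℤ → Bool) → (ℤ → Bool)} {r : ℕ} (h : HasRadius (SGap S) F r)
    {x : ℤ → Bool} (hx : x ∈ SGap S) (k : ℤ) :
    F (shiftPow k x) = shiftPow k (F x) := by
  obtain ⟨f, hf⟩ := h
  funext i
  rw [hf _ (SGap_shiftPow hx k) i]
  show _ = F x (i + k)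
  rw [hf x hx (i + k)]
  congr 1
  funext j
  show x (i - r + j + k) = x (i + k - r + j)
  congr 1
  ring

end Helpers
section Words

variable {S : Set ℕ}

/-- A word that occurs in the language of the S-gap shift. -/
def GoodWord (S : Set ℕ) (v : List Bool) : Prop := ∃ w, InGenStar S w ∧ v <:+: w

lemma mem_SGap_iff {x : ℤ → Bool} : x ∈ SGap S ↔ ∀ (i : ℤ) (n : ℕ), GoodWord S (wordAt x i n) :=
  Iff.rfl

lemma exists_ge (hinf : S.Infinite) (m : ℕ) : ∃ m' ∈ S, m ≤ m' := by
  obtain ⟨b, hb, hlt⟩ := hinf.exists_gt m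
  exact ⟨b, hb, hlt.le⟩

/-- Splitting a concatenation of generating words at a `false`. -/
lemma splitD : ∀ (l : List ℕ), (∀ n ∈ l, n ∈ S) → ∀ (α β : List Bool),
    (l.map genWord).flatten = α ++ false :: β →
    ∃ l₁ l₂ : List ℕ, (∀ n ∈ l₁, n ∈ S) ∧ (∀ n ∈ l₂, n ∈ S) ∧
      α = (l₁.map genWord).flatten ∧ false :: β = (l₂.map genWord).flatten := by
  intro l
  induction l with
  | nil =>
    intro _ α β h
    exact absurd (congrArg List.length h) (by simp)
  | cons n l' ih =>
    intro hmem α β h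
    have hS' : ∀ m ∈ l', m ∈ S := fun m hm => hmem m (List.mem_cons_of_mem n hm)
    match α with
    | [] =>
      refine ⟨[], n :: l', by simp, hmem, by simp, ?_⟩
      simpa using h.symm
    | b :: α' =>
      set J := (l'.map genWord).flatten with hJ
      have h' : false :: (List.replicate n true ++ J) = b :: (α' ++ false :: β) := by
        simpa [genWord] using h
      obtain ⟨hb, heq⟩ := List.cons_eq_cons.mp h'
      have hlen : n ≤ α'.length := by
        by_contra hlt
        push_neg at hlt
        have hi1 : α'.length < (List.replicate n true ++ J).length := by
          simp; omega
        have h1 : (List.replicate n true ++ J)[α'.length]'hi1 = true := by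
          rw [List.getElem_append_left (by simpa using hlt)]
          simp
        have h2 : (α' ++ false :: β)[α'.length]'(by simp) = false := by
          rw [List.getElem_append_right (le_refl _)]
          simp
        have h3 := List.getElem_of_eq heq hi1
        rw [h1] at h3
        rw [List.getElem_append_right (le_refl _)] at h3
        simp at h3
      have h5 : J = α'.drop n ++ false :: β := by
        have hd := congrArg (List.drop n) heq
        rwa [List.drop_append_of_le_length hlen,
          List.drop_left' (List.length_replicate (n := n) (a := true))] at hd
      have h6 : α'.take n = List.replicate n true := by
        have ht := congrArg (List.take n) heq
        rw [List.take_append_of_le_length hlen,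
          List.take_left' (List.length_replicate (n := n) (a := true))] at ht
        exact ht.symm

      obtain ⟨l₁, l₂, hl₁S, hl₂S, hα, hβ⟩ := ih hS' (α'.drop n) β h5
      refine ⟨n :: l₁, l₂, ?_, hl₂S, ?_, hβ⟩
      · intro m hm
        rcases List.mem_cons.mp hm with rfl | hm'
        · exact hmem m List.mem_cons_self
        · exact hl₁S m hm'
      · have hjc : ((n :: l₁).map genWord).flatten = genWord n ++ (l₁.map genWord).flatten := by
          simp
        rw [hjc, ← hα, ← hb, genWord]
        conv_lhs => rw [← List.take_append_drop n α', h6]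
        simp

end Words
section Good

variable {S : Set ℕ}

lemma good_ones (hinf : S.Infinite) (k : ℕ) : GoodWord S (List.replicate k true) := by
  obtain ⟨m, hmS, hkm⟩ := exists_ge hinf k
  refine ⟨genWord m, ⟨[m], by simpa using hmS, by simp⟩, ?_⟩
  refine ⟨[false], List.replicate (m - k) true, ?_⟩
  show [false] ++ List.replicate k true ++ List.replicate (m - k) true = genWord m
  rw [genWord, List.append_assoc, ← List.replicate_add, Nat.add_sub_cancel' hkm]
  rfl

lemma good_zero_ones (hinf : S.Infinite) (k : ℕ) :
    GoodWord S (false :: List.replicate k true) := by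
  obtain ⟨m, hmS, hkm⟩ := exists_ge hinf k
  refine ⟨genWord m, ⟨[m], by simpa using hmS, by simp⟩, ?_⟩
  refine ⟨[], List.replicate (m - k) true, ?_⟩
  show false :: List.replicate k true ++ List.replicate (m - k) true = genWord m
  rw [genWord, List.cons_append, ← List.replicate_add, Nat.add_sub_cancel' hkm]

lemma good_extendR (hinf : S.Infinite) {u : List Bool}
    (h : GoodWord S (u ++ [false])) (k : ℕ) :
    GoodWord S (u ++ false :: List.replicate k true) := by
  obtain ⟨w, ⟨l, hlS, rfl⟩, s, t, hst⟩ := h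
  have hst' : (l.map genWord).flatten = (s ++ u) ++ false :: t := by
    rw [← hst]; simp
  obtain ⟨l₁, _, hl₁S, _, hα, _⟩ := splitD l hlS _ _ hst'
  obtain ⟨m, hmS, hkm⟩ := exists_ge hinf k
  refine ⟨((l₁ ++ [m]).map genWord).flatten, ⟨l₁ ++ [m], ?_, rfl⟩,
    s, List.replicate (m - k) true, ?_⟩
  · intro n hn
    rcases List.mem_append.mp hn with hn' | hn'
    · exact hl₁S n hn'
    · simp at hn'; subst hn'; exact hmS
  · have hj : ((l₁ ++ [m]).map genWord).flatten = (l₁.map genWord).flatten ++ genWord m := by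
      simp
    rw [hj, ← hα, genWord,
      show List.replicate m true = List.replicate k true ++ List.replicate (m - k) true by
        rw [← List.replicate_add, Nat.add_sub_cancel' hkm]]
    simp

lemma good_extendL (hinf : S.Infinite) {u : List Bool}
    (h : GoodWord S (false :: u)) (k : ℕ) :
    GoodWord S (List.replicate k true ++ false :: u) := by
  obtain ⟨w, ⟨l, hlS, rfl⟩, s, t, hst⟩ := h
  have hst' : (l.map genWord).flatten = s ++ false :: (u ++ t) := by
    rw [← hst]; simp
  obtain ⟨_, l₂, _, hl₂S, _, hβ⟩ := splitD l hlS _ _ hst'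
  obtain ⟨m, hmS, hkm⟩ := exists_ge hinf k
  refine ⟨((m :: l₂).map genWord).flatten, ⟨m :: l₂, ?_, rfl⟩,
    false :: List.replicate (m - k) true, t, ?_⟩
  · intro n hn
    rcases List.mem_cons.mp hn with rfl | hn'
    · exact hmS
    · exact hl₂S n hn'
  · have hj : ((m :: l₂).map genWord).flatten = genWord m ++ (l₂.map genWord).flatten := by
      simp
    rw [hj, ← hβ, genWord,
      show List.replicate m true = List.replicate (m - k) true ++ List.replicate k true by
        rw [← List.replicate_add, Nat.sub_add_cancel hkm]]
    simp
    rw [List.replicate_add, List.append_assoc]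

end Good
section Points

variable {S : Set ℕ}

/-- All-ones configuration. -/
def onesPt : ℤ → Bool := fun _ => true

lemma onesPt_mem (hinf : S.Infinite) : onesPt ∈ SGap S := by
  intro a m
  show GoodWord S _
  rw [wordAt_eq_replicate (c := true) (fun _ _ => rfl)]
  exact good_ones hinf m

/-- Left extension: keep `x` up to `i`, all ones after. -/
def leftPt (x : ℤ → Bool) (i : ℤ) : ℤ → Bool := fun j => if j ≤ i then x j else true

/-- Right extension: all ones before `i`, keep `x` from `i` on. -/
def rightPt (x : ℤ → Bool) (i : ℤ) : ℤ → Bool := fun j => if i ≤ j then x j else true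

lemma leftPt_mem (hinf : S.Infinite) {x : ℤ → Bool} {i : ℤ} (hx : x ∈ SGap S)
    (h0 : x i = false) : leftPt x i ∈ SGap S := by
  intro a m
  show GoodWord S _
  by_cases hc1 : i < a
  · rw [wordAt_eq_replicate (c := true)
      (fun k _ => by simp only [leftPt]; rw [if_neg (by omega)])]
    exact good_ones hinf m
  push_neg at hc1
  by_cases hc2 : a + m ≤ i + 1
  · rw [wordAt_congr (y := x)
      (fun k hk => by simp only [leftPt]; rw [if_pos (by omega)])]
    exact hx a m
  push_neg at hc2
  set t : ℕ := (i - a).toNat with ht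
  have hti : (t : ℤ) = i - a := Int.toNat_of_nonneg (by omega)
  have htm : t + 1 ≤ m := by omega
  rw [show m = (t + 1) + (m - (t + 1)) by omega, wordAt_add]
  have hfirst : wordAt (leftPt x i) a (t + 1) = wordAt x a (t + 1) :=
    wordAt_congr (fun k hk => by simp only [leftPt]; rw [if_pos (by omega)])
  have hsecond : wordAt (leftPt x i) (a + (t + 1)) (m - (t + 1)) =
      List.replicate (m - (t + 1)) true :=
    wordAt_eq_replicate (fun k _ => by simp only [leftPt]; rw [if_neg (by push_cast; omega)])
  push_cast
  rw [hfirst, hsecond, wordAt_snoc]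
  have hx0 : x (a + t) = false := by
    rw [show a + (t : ℤ) = i by omega]
    exact h0
  rw [hx0]
  have hgood : GoodWord S (wordAt x a t ++ [false]) := by
    have := hx a (t + 1)
    rwa [wordAt_snoc, hx0] at this
  have := good_extendR hinf hgood (m - (t + 1))
  simpa using this

lemma rightPt_mem (hinf : S.Infinite) {x : ℤ → Bool} {i : ℤ} (hx : x ∈ SGap S)
    (h0 : x i = false) : rightPt x i ∈ SGap S := by
  intro a m
  show GoodWord S _
  by_cases hc1 : i ≤ a
  · rw [wordAt_congr (y := x)
      (fun k hk => by simp only [rightPt]; rw [if_pos (by omega)])]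
    exact hx a m
  push_neg at hc1
  by_cases hc2 : a + m ≤ i
  · rw [wordAt_eq_replicate (c := true)
      (fun k hk => by simp only [rightPt]; rw [if_neg (by omega)])]
    exact good_ones hinf m
  push_neg at hc2
  set t : ℕ := (i - a).toNat with ht
  have hti : (t : ℤ) = i - a := Int.toNat_of_nonneg (by omega)
  have htm : t < m := by omega
  rw [show m = t + (m - t) by omega, wordAt_add]
  have hfirst : wordAt (rightPt x i) a t = List.replicate t true :=
    wordAt_eq_replicate (fun k hk => by simp only [rightPt]; rw [if_neg (by omega)])
  have hat : a + (t : ℤ) = i := by omega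
  have hsecond : wordAt (rightPt x i) (a + t) (m - t) = wordAt x i (m - t) := by
    rw [hat]
    exact wordAt_congr (fun k hk => by simp only [rightPt]; rw [if_pos (by omega)])
  rw [hfirst, hsecond]
  rw [show m - t = (m - t - 1) + 1 by omega, wordAt_cons, h0]
  have hgood : GoodWord S (false :: wordAt x (i + 1) (m - t - 1)) := by
    have := hx i ((m - t - 1) + 1)
    rwa [wordAt_cons, h0] at this
  exact good_extendL hinf hgood t

/-- The configuration `...111 0 111...` with the zero at the origin. -/
def pPt : ℤ → Bool := fun j => if j = 0 then false else true

lemma pPt_mem (hinf : S.Infinite) : pPt ∈ SGap S := by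
  intro a m
  show GoodWord S _
  by_cases hc1 : 0 < a
  · rw [wordAt_eq_replicate (c := true)
      (fun k _ => by simp only [pPt]; rw [if_neg (by omega)])]
    exact good_ones hinf m
  push_neg at hc1
  by_cases hc2 : a + m ≤ 0
  · rw [wordAt_eq_replicate (c := true)
      (fun k hk => by simp only [pPt]; rw [if_neg (by omega)])]
    exact good_ones hinf m
  push_neg at hc2
  set t : ℕ := (-a).toNat with ht
  have hti : (t : ℤ) = -a := Int.toNat_of_nonneg (by omega)
  have htm : t < m := by omega
  rw [show m = t + (m - t) by omega, wordAt_add]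
  have hfirst : wordAt pPt a t = List.replicate t true :=
    wordAt_eq_replicate (fun k hk => by simp only [pPt]; rw [if_neg (by omega)])
  have hat : a + (t : ℤ) = 0 := by omega
  have hsecond : wordAt pPt (a + t) (m - t) = false :: List.replicate (m - t - 1) true := by
    rw [hat, show m - t = (m - t - 1) + 1 by omega, wordAt_cons,
      show pPt 0 = false by simp [pPt]]
    congr 1
    exact wordAt_eq_replicate (fun k _ => by simp only [pPt]; rw [if_neg (by omega)])
  rw [hfirst, hsecond]
  exact good_extendL hinf (good_zero_ones hinf (m - t - 1)) t

lemma pPt_mem_right (hinf : S.Infinite) : pPt ∈ SGapRight S := by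
  refine ⟨pPt_mem hinf, by simp [pPt], fun i hi => by simp only [pPt]; rw [if_neg (by omega)]⟩

end Points
section Key

variable {S : Set ℕ}

lemma gapWord_get (n k : ℕ) (hk : k < (gapWord n).length) :
    (gapWord n).get ⟨k, hk⟩ = if 1 ≤ k ∧ k ≤ n then true else false := by
  rw [List.get_eq_getElem]
  unfold gapWord at hk ⊢
  match k with
  | 0 => simp
  | k + 1 =>
    rw [List.getElem_cons_succ]
    have hk' : k ≤ n := by simp [gapWord] at hk; omega
    by_cases hkn : k < n
    · rw [List.getElem_append_left (by simpa using hkn), List.getElem_replicate]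
      rw [if_pos (by omega)]
    · have hk1 : k = n := by omega
      subst hk1
      rw [List.getElem_append_right (by simp)]
      simp

lemma gapWord_length (n : ℕ) : (gapWord n).length = n + 2 := by
  simp [gapWord]

lemma occursAt_gapWord_iff {x : ℤ → Bool} {i : ℤ} {n : ℕ} :
    occursAt x (gapWord n) i ↔
      x i = false ∧ (∀ k : ℕ, 1 ≤ k → k ≤ n → x (i + k) = true) ∧
        x (i + ((n : ℤ) + 1)) = false := by
  constructor
  · intro h
    refine ⟨?_, ?_, ?_⟩
    · have := h 0 (by rw [gapWord_length]; omega)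
      rw [gapWord_get] at this
      simpa using this
    · intro k h1 h2
      have := h k (by rw [gapWord_length]; omega)
      rwa [gapWord_get, if_pos ⟨h1, h2⟩] at this
    · have := h (n + 1) (by rw [gapWord_length]; omega)
      rw [gapWord_get, if_neg (by omega)] at this
      push_cast at this
      exact this
  · intro ⟨h0, h1, h2⟩ k hk
    rw [gapWord_length] at hk
    rw [gapWord_get]
    by_cases hc : 1 ≤ k ∧ k ≤ n
    · rw [if_pos hc]
      exact h1 k hc.1 hc.2
    · rw [if_neg hc]
      by_cases hk0 : k = 0
      · subst hk0
        simpa using h0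
      · have hkeq : k = n + 1 := by
          rcases Nat.lt_or_ge n k with hnk | hnk
          · omega
          · exact absurd ⟨by omega, hnk⟩ hc
        subst hkeq
        push_cast
        exact h2

/-- The key one-sided lemma: a shiftless radius-`r` endomorphism preserves
occurrences of `0 1^n 0` for `n ≥ 2r`. -/
lemma key_lemma (hinf : S.Infinite) (H : (ℤ → Bool) → (ℤ → Bool)) (r : ℕ)
    (hr : HasRadius (SGap S) H r)
    (hl : H '' SGapLeft S ⊆ SGapLeft S) (hrr : H '' SGapRight S ⊆ SGapRight S)
    {x : ℤ → Bool} (hx : x ∈ SGap S) (i : ℤ) (n : ℕ) (hn : 2 * r ≤ n)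
    (hocc : occursAt x (gapWord n) i) : occursAt (H x) (gapWord n) i := by
  rw [occursAt_gapWord_iff] at hocc ⊢
  obtain ⟨h0, h1, h2⟩ := hocc
  set y := leftPt x i with hy_def
  set z := rightPt x (i + ((n : ℤ) + 1)) with hz_def
  have hy : y ∈ SGap S := leftPt_mem hinf hx h0
  have hz : z ∈ SGap S := rightPt_mem hinf hx h2
  -- the shifted left point is in SGapLeft
  have hyL : shiftPow i y ∈ SGapLeft S := by
    refine ⟨SGap_shiftPow hy i, ?_, ?_⟩
    · show y (0 + i) = false
      rw [zero_add, hy_def]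
      simp only [leftPt]
      rw [if_pos (le_refl i)]
      exact h0
    · intro j hj
      show y (j + i) = true
      simp only [leftPt, hy_def]
      rw [if_neg (by omega)]
  have hzR : shiftPow (i + ((n : ℤ) + 1)) z ∈ SGapRight S := by
    refine ⟨SGap_shiftPow hz _, ?_, ?_⟩
    · show z (0 + (i + ((n : ℤ) + 1))) = false
      rw [zero_add, hz_def]
      simp only [rightPt]
      rw [if_pos (le_refl _)]
      exact h2
    · intro j hj
      show z (j + (i + ((n : ℤ) + 1))) = true
      simp only [rightPt, hz_def]
      rw [if_neg (by omega)]
  have hFyL : shiftPow i (H y) ∈ SGapLeft S := by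
    rw [← radius_shiftPow hr hy i]
    exact hl ⟨_, hyL, rfl⟩
  have hFzR : shiftPow (i + ((n : ℤ) + 1)) (H z) ∈ SGapRight S := by
    rw [← radius_shiftPow hr hz _]
    exact hrr ⟨_, hzR, rfl⟩
  have HY0 : H y i = false := by
    simpa [shiftPow] using hFyL.2.1
  have HY1 : ∀ j : ℤ, 0 < j → H y (j + i) = true := fun j hj => hFyL.2.2 j hj
  have HZ0 : H z (i + ((n : ℤ) + 1)) = false := by
    simpa [shiftPow] using hFzR.2.1
  have HZ1 : ∀ j : ℤ, j < 0 → H z (j + (i + ((n : ℤ) + 1))) = true :=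
    fun j hj => hFzR.2.2 j hj
  -- agreements
  have hyx : ∀ j : ℤ, j ≤ i + n → y j = x j := by
    intro j hj
    simp only [leftPt, hy_def]
    split
    · rfl
    · rename_i hni
      push_neg at hni
      have : x j = true := by
        have h3 := h1 (j - i).toNat (by omega) (by omega)
        rwa [show i + ((j - i).toNat : ℤ) = j by omega] at h3
      rw [this]
  have hzx : ∀ j : ℤ, i + 1 ≤ j → z j = x j := by
    intro j hj
    simp only [rightPt, hz_def]
    split
    · rfl
    · rename_i hni
      push_neg at hni
      have : x j = true := by
        have h3 := h1 (j - i).toNat (by omega) (by omega)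
        rwa [show i + ((j - i).toNat : ℤ) = j by omega] at h3
      rw [this]
  have Hyx : ∀ j : ℤ, j ≤ i + n - r → H y j = H x j := by
    intro j hj
    exact radius_eq hr hy hx j (fun j' hj1 hj2 => hyx j' (by omega))
  have Hzx : ∀ j : ℤ, i + 1 + r ≤ j → H z j = H x j := by
    intro j hj
    exact radius_eq hr hz hx j (fun j' hj1 hj2 => hzx j' (by omega))
  refine ⟨?_, ?_, ?_⟩
  · rw [← Hyx i (by omega)]
    exact HY0
  · intro k hk1 hk2
    by_cases hc : k + r ≤ n
    · rw [show i + (k : ℤ) = (k : ℤ) + i by ring, ← Hyx ((k : ℤ) + i) (by omega)]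
      exact HY1 k (by omega)
    · push_neg at hc
      rw [← Hzx (i + (k : ℤ)) (by omega)]
      rw [show i + (k : ℤ) = ((k : ℤ) - ((n : ℤ) + 1)) + (i + ((n : ℤ) + 1)) by ring]
      exact HZ1 _ (by omega)
  · rw [← Hzx (i + ((n : ℤ) + 1)) (by omega)]
    exact HZ0

end Key
theorem stmt13' (S : Set ℕ) (hS : S.Nonempty) (hinf : S.Infinite)
    (hnp : ¬ EventuallyPeriodic S)
    (F G : (ℤ → Bool) → (ℤ → Bool)) (r : ℕ)
    (hFmaps : Set.MapsTo F (SGap S) (SGap S)) (hGmaps : Set.MapsTo G (SGap S) (SGap S))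
    (hFr : HasRadius (SGap S) F r) (hGr : HasRadius (SGap S) G r)
    (hinv : ∀ x ∈ SGap S, G (F x) = x ∧ F (G x) = x)
    (hshiftless : F '' SGapLeft S ⊆ SGapLeft S ∧ F '' SGapRight S ⊆ SGapRight S) :
    ∀ x ∈ SGap S, ∀ i : ℤ, ∀ n : ℕ, 2 * r ≤ n →
      (occursAt x (gapWord n) i ↔ occursAt (F x) (gapWord n) i) := by
  obtain ⟨hFl, hFrr⟩ := hshiftless
  have h1X : onesPt ∈ SGap S := onesPt_mem hinf
  have hpX : pPt ∈ SGapRight S := pPt_mem_right hinf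
  have hFp : F pPt ∈ SGapRight S := hFrr ⟨pPt, hpX, rfl⟩
  -- F fixes the all-ones point
  have hones : F onesPt = onesPt := by
    obtain ⟨f, hf⟩ := hFr
    have hval : F pPt (-(r : ℤ) - 1) = true := hFp.2.2 _ (by omega)
    have hval2 : F pPt (-(r : ℤ) - 1) = f (fun _ => true) := by
      rw [hf pPt hpX.1 _]
      congr 1
      funext k
      have hk := k.isLt
      simp only [pPt]
      rw [if_neg (by omega)]
    funext j
    rw [hf onesPt h1X j]
    show f (fun _ => true) = true
    rw [← hval2]
    exact hval
  have hGones : G onesPt = onesPt := by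
    conv_lhs => rw [← hones]
    exact (hinv onesPt h1X).1
  -- G is shiftless on the left points
  have hGl : G '' SGapLeft S ⊆ SGapLeft S := by
    rintro _ ⟨y, ⟨hyX, hy0, hy1⟩, rfl⟩
    have hGyX : G y ∈ SGap S := hGmaps hyX
    have htail : ∀ j : ℤ, (r : ℤ) < j → G y j = true := by
      intro j hj
      have heq := radius_eq hGr hyX h1X j (fun j' h1' h2' => hy1 j' (by omega))
      rw [heq, hGones]
      rfl
    have hne : ∃ j : ℤ, G y j = false := by
      by_contra hno
      push_neg at hno
      have hGyo : G y = onesPt := funext (fun j => by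
        cases hGyj : G y j
        · exact absurd hGyj (hno j)
        · rfl)
      have hyo : y = onesPt := by
        rw [← (hinv y hyX).2, hGyo, hones]
      rw [hyo] at hy0
      exact Bool.noConfusion hy0
    obtain ⟨k, hk0, hkmax⟩ := Int.exists_greatest_of_bdd
      (P := fun j => G y j = false) ⟨r, fun z hz => by
        by_contra hzr
        push_neg at hzr
        have hz' : G y z = false := hz
        rw [htail z hzr] at hz'
        exact Bool.noConfusion hz'⟩ hne
    have hsl : shiftPow k (G y) ∈ SGapLeft S := by
      refine ⟨SGap_shiftPow hGyX k, by simpa [shiftPow] using hk0, fun j hj => ?_⟩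
      show G y (j + k) = true
      cases h : G y (j + k)
      · exact absurd (hkmax _ h) (by omega)
      · rfl
    have hFsl : shiftPow k y ∈ SGapLeft S := by
      have himg := hFl ⟨_, hsl, rfl⟩
      rwa [radius_shiftPow hFr hGyX k, (hinv y hyX).2] at himg
    have hk_eq : k = 0 := by
      by_contra hkne
      rcases lt_or_gt_of_ne hkne with hlt | hgt
      · have h4 := hFsl.2.2 (-k) (by omega)
        have h5 : y 0 = true := by
          have : y (-k + k) = true := h4
          rwa [show -k + k = 0 by ring] at this
        rw [h5] at hy0
        exact Bool.noConfusion hy0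
      · have h4 : y (0 + k) = false := hFsl.2.1
        rw [zero_add, hy1 k hgt] at h4
        exact Bool.noConfusion h4
    subst hk_eq
    refine ⟨hGyX, by simpa [shiftPow] using hk0, fun j hj => ?_⟩
    cases h : G y j
    · exact absurd (hkmax _ h) (by omega)
    · rfl
  -- G is shiftless on the right points
  have hGrr : G '' SGapRight S ⊆ SGapRight S := by
    rintro _ ⟨y, ⟨hyX, hy0, hy1⟩, rfl⟩
    have hGyX : G y ∈ SGap S := hGmaps hyX
    have htail : ∀ j : ℤ, j < -(r : ℤ) → G y j = true := by
      intro j hj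
      have heq := radius_eq hGr hyX h1X j (fun j' h1' h2' => hy1 j' (by omega))
      rw [heq, hGones]
      rfl
    have hne : ∃ j : ℤ, G y j = false := by
      by_contra hno
      push_neg at hno
      have hGyo : G y = onesPt := funext (fun j => by
        cases hGyj : G y j
        · exact absurd hGyj (hno j)
        · rfl)
      have hyo : y = onesPt := by
        rw [← (hinv y hyX).2, hGyo, hones]
      rw [hyo] at hy0
      exact Bool.noConfusion hy0
    obtain ⟨k, hk0, hkmin⟩ := Int.exists_least_of_bdd
      (P := fun j => G y j = false) ⟨-(r : ℤ), fun z hz => by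
        by_contra hzr
        push_neg at hzr
        have hz' : G y z = false := hz
        rw [htail z (by omega)] at hz'
        exact Bool.noConfusion hz'⟩ hne
    have hsl : shiftPow k (G y) ∈ SGapRight S := by
      refine ⟨SGap_shiftPow hGyX k, by simpa [shiftPow] using hk0, fun j hj => ?_⟩
      show G y (j + k) = true
      cases h : G y (j + k)
      · exact absurd (hkmin _ h) (by omega)
      · rfl
    have hFsl : shiftPow k y ∈ SGapRight S := by
      have himg := hFrr ⟨_, hsl, rfl⟩
      rwa [radius_shiftPow hFr hGyX k, (hinv y hyX).2] at himg
    have hk_eq : k = 0 := by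
      by_contra hkne
      rcases lt_or_gt_of_ne hkne with hlt | hgt
      · have h4 : y (0 + k) = false := hFsl.2.1
        rw [zero_add, hy1 k hlt] at h4
        exact Bool.noConfusion h4
      · have h4 := hFsl.2.2 (-k) (by omega)
        have h5 : y 0 = true := by
          have : y (-k + k) = true := h4
          rwa [show -k + k = 0 by ring] at this
        rw [h5] at hy0
        exact Bool.noConfusion hy0
    subst hk_eq
    refine ⟨hGyX, by simpa [shiftPow] using hk0, fun j hj => ?_⟩
    cases h : G y j
    · exact absurd (hkmin _ h) (by omega)
    · rfl
  intro x hx i n hn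
  constructor
  · exact key_lemma hinf F r hFr hFl hFrr hx i n hn
  · intro hocc
    have hFx : F x ∈ SGap S := hFmaps hx
    have h6 := key_lemma hinf G r hGr hGl hGrr hFx i n hn hocc
    rwa [(hinv x hx).1] at h6

/-- For a non-sofic `S`-gap shift and a shiftless automorphism `F` of
radius `r` whose inverse also has radius `r`, the word `01^n0` (`n ≥ 2r`) occurs in `x` at
position `i` iff it occurs in `F(x)` at position `i`. -/
theorem stmt13 (S : Set ℕ) (hS : S.Nonempty) (hinf : S.Infinite)
    (hnp : ¬ EventuallyPeriodic S)
    (F G : (ℤ → Bool) → (ℤ → Bool)) (r : ℕ)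
    (hFmaps : Set.MapsTo F (SGap S) (SGap S)) (hGmaps : Set.MapsTo G (SGap S) (SGap S))
    (hFr : HasRadius (SGap S) F r) (hGr : HasRadius (SGap S) G r)
    (hinv : ∀ x ∈ SGap S, G (F x) = x ∧ F (G x) = x)
    (hshiftless : F '' SGapLeft S ⊆ SGapLeft S ∧ F '' SGapRight S ⊆ SGapRight S) :
    ∀ x ∈ SGap S, ∀ i : ℤ, ∀ n : ℕ, 2 * r ≤ n →
      (occursAt x (gapWord n) i ↔ occursAt (F x) (gapWord n) i) := by
  exact stmt13' S hS hinf hnp F G r hFmaps hGmaps hFr hGr hinv hshiftless
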